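/- arXiv:2110.08782 — 7 statements merged into one kernel-verified Lean document; each statement's English description precedes it below -/
import Mathlib

section
/- Let A, B be δ-bounded-difference n×n integer matrices and let C = A ⋆ B be their min-plus product, C_{i,j} = min_k (A_{i,k} + B_{k,j}). If i, i', j, j' satisfy |i-i'| ≤ m and |j-j'| ≤ m, then |C_{i,j} - C_{i',j'}| ≤ 2δm. (The min-plus product of bounded-difference matrices is bounded-difference with the same constant, up to a factor 2 per block step.) -/
/-- A matrix (as a function on `Fin n`) is `δ`-bounded-difference if entries at
adjacent positions (differing by 1 in one coordinate) differ by at most `δ`. -/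
def BDiff {n : ℕ} (δ : ℤ) (A : Fin n → Fin n → ℤ) : Prop :=
  ∀ i j i' j' : Fin n,
    ((i'.val = i.val + 1 ∧ j' = j) ∨ (i' = i ∧ j'.val = j.val + 1)) →
    |A i' j' - A i j| ≤ δ

/-- Representative (first element) of the length-`m` block containing `i`. -/
def rep {n : ℕ} (m : ℕ) (i : Fin n) : Fin n :=
  ⟨m * (i.val / m),
    lt_of_le_of_lt (by rw [Nat.mul_comm]; exact Nat.div_mul_le_self _ _) i.isLt⟩

/-- Min-plus product `C = A ⋆ B`. -/
def minplus {n : ℕ} (A B : Fin n → Fin n → ℤ) (i j : Fin n) : ℤ :=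
  Finset.inf' Finset.univ ⟨i, Finset.mem_univ i⟩ (fun k => A i k + B k j)

/-- Block-approximate min-plus product: minimum over representative indices. -/
def Ctil {n : ℕ} (m : ℕ) (A B : Fin n → Fin n → ℤ) (i j : Fin n) : ℤ :=
  Finset.inf' ((Finset.univ : Finset (Fin n)).filter fun k => m ∣ k.val)
    ⟨⟨0, i.pos⟩, by simp⟩ (fun k => A (rep m i) k + B k (rep m j))

/-- Candidate set `K(i',j')`. -/
def Kset {n : ℕ} (m : ℕ) (δ : ℤ) (A B : Fin n → Fin n → ℤ) (i j : Fin n) :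
    Finset (Fin n) :=
  Finset.univ.filter
    (fun k => m ∣ k.val ∧
      A (rep m i) k + B k (rep m j) ≤ Ctil m A B i j + 8 * δ * m)

lemma row_d {n : ℕ} {δ : ℤ} (hδ : 0 ≤ δ) {A : Fin n → Fin n → ℤ} (hA : BDiff δ A) :
    ∀ d : ℕ, ∀ i i' k : Fin n, i'.val = i.val + d → |A i' k - A i k| ≤ δ * d := by
  intro d
  induction d with
  | zero => intro i i' k h; have : i' = i := Fin.ext (by omega); simp [this]
  | succ d ih =>
    intro i i' k h
    have hm : i.val + d < n := by omega
    set mid : Fin n := ⟨i.val + d, hm⟩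
    calc |A i' k - A i k| ≤ |A i' k - A mid k| + |A mid k - A i k| := abs_sub_le _ _ _
    _ ≤ δ + δ * d := by
        gcongr
        · exact hA mid k i' k (Or.inl ⟨by simp [mid]; omega, rfl⟩)
        · exact ih i mid k rfl
    _ = δ * (d + 1 : ℕ) := by push_cast; ring

lemma row_bd {n : ℕ} {δ : ℤ} (hδ : 0 ≤ δ) {A : Fin n → Fin n → ℤ} (hA : BDiff δ A)
    (i i' k : Fin n) : |A i k - A i' k| ≤ δ * |(i.val : ℤ) - i'.val| := by
  rcases le_total i.val i'.val with h | h
  · have := row_d hδ hA (i'.val - i.val) i i' k (by omega)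
    rw [abs_sub_comm]
    calc |A i' k - A i k| ≤ δ * ((i'.val - i.val : ℕ) : ℤ) := this
    _ = δ * |(i.val : ℤ) - i'.val| := by
        rw [abs_sub_comm, abs_of_nonneg (by push_cast; omega), Nat.cast_sub h]
  · have := row_d hδ hA (i.val - i'.val) i' i k (by omega)
    calc |A i k - A i' k| ≤ δ * ((i.val - i'.val : ℕ) : ℤ) := this
    _ = δ * |(i.val : ℤ) - i'.val| := by
        rw [abs_of_nonneg (by push_cast; omega), Nat.cast_sub h]

-- column version via transpose
lemma col_bd {n : ℕ} {δ : ℤ} (hδ : 0 ≤ δ) {B : Fin n → Fin n → ℤ} (hB : BDiff δ B)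
    (k j j' : Fin n) : |B k j - B k j'| ≤ δ * |(j.val : ℤ) - j'.val| := by
  have hB' : BDiff δ (fun a b => B b a) := by
    intro i j i' j' h
    rcases h with ⟨a, b⟩ | ⟨a, b⟩
    · exact hB j i j' i' (Or.inr ⟨b, a⟩)
    · exact hB j i j' i' (Or.inl ⟨b, a⟩)
  exact row_bd hδ hB' j j' k

lemma minplus_le {n : ℕ} (δ : ℤ) (hδ : 0 ≤ δ) (A B : Fin n → Fin n → ℤ)
    (hA : BDiff δ A) (hB : BDiff δ B) (m : ℕ) (i i' j j' : Fin n)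
    (hi : |(i.val : ℤ) - (i'.val : ℤ)| ≤ m)
    (hj : |(j.val : ℤ) - (j'.val : ℤ)| ≤ m) :
    minplus A B i j - minplus A B i' j' ≤ 2 * δ * m := by
  obtain ⟨k, -, hk⟩ := Finset.exists_mem_eq_inf' (⟨i', Finset.mem_univ i'⟩ :
    (Finset.univ : Finset (Fin n)).Nonempty) (fun k => A i' k + B k j')
  have h1 : minplus A B i j ≤ A i k + B k j :=
    Finset.inf'_le _ (Finset.mem_univ k)
  have h2 : minplus A B i' j' = A i' k + B k j' := hk
  have hr := (abs_le.1 (row_bd hδ hA i i' k)).2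
  have hc := (abs_le.1 (col_bd hδ hB k j j')).2
  have hrm : δ * |(i.val : ℤ) - i'.val| ≤ δ * m := by gcongr
  have hcm : δ * |(j.val : ℤ) - j'.val| ≤ δ * m := by gcongr
  nlinarith [h1, h2]


/-- the min-plus product of δ-bounded-difference matrices satisfies
`|C i j - C i' j'| ≤ 2δm` whenever `|i - i'| ≤ m` and `|j - j'| ≤ m`. -/
theorem stmt2 {n : ℕ} (δ : ℤ) (hδ : 0 < δ) (A B : Fin n → Fin n → ℤ)
    (hA : BDiff δ A) (hB : BDiff δ B) (m : ℕ) (i i' j j' : Fin n)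
    (hi : |(i.val : ℤ) - (i'.val : ℤ)| ≤ m)
    (hj : |(j.val : ℤ) - (j'.val : ℤ)| ≤ m) :
    |minplus A B i j - minplus A B i' j'| ≤ 2 * δ * m := by
  rw [abs_le]
  constructor
  · have := minplus_le δ hδ.le A B hA hB m i' i j' j (by rwa [abs_sub_comm]) (by rwa [abs_sub_comm])
    linarith
  · exact minplus_le δ hδ.le A B hA hB m i i' j j' hi hj
end

section
/- Let A, B be δ-bounded-difference n×n matrices, C = A ⋆ B their min-plus product, and let C̃_{i,j} = min over representative indices k' (multiples of m, say) of A_{i',k'} + B_{k',j'}, where i', j' are the representatives of the blocks of i, j. Then for all i, j we have C_{i,j} ≤ C̃_{i,j} + 2δm and C̃_{i,j} ≤ C_{i,j} + 4δm; hence |C_{i,j} - C̃_{i,j}| ≤ 4δm. -/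
lemma bdiff_row {n : ℕ} {δ : ℤ} {A : Fin n → Fin n → ℤ} (hA : BDiff δ A)
    (k : Fin n) : ∀ d : ℕ, ∀ a b : Fin n, b.val = a.val + d →
    |A b k - A a k| ≤ δ * d := by
  intro d
  induction d with
  | zero =>
    intro a b h
    have : b = a := Fin.ext (by omega)
    simp [this]
  | succ d ih =>
    intro a b h
    have hb' : a.val + d < n := by omega
    have h1 := ih a ⟨a.val + d, hb'⟩ rfl
    have h2 := hA ⟨a.val + d, hb'⟩ k b k (Or.inl ⟨by simp [h]; omega, rfl⟩)
    have h3 := abs_sub_le (A b k) (A ⟨a.val + d, hb'⟩ k) (A a k)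
    have h4 := abs_sub_abs_le_abs_sub (A b k) (A a k)
    push_cast
    rw [abs_sub_le_iff] at *
    constructor <;> nlinarith

lemma bdiff_col {n : ℕ} {δ : ℤ} {B : Fin n → Fin n → ℤ} (hB : BDiff δ B)
    (k : Fin n) : ∀ d : ℕ, ∀ a b : Fin n, b.val = a.val + d →
    |B k b - B k a| ≤ δ * d := by
  intro d
  induction d with
  | zero =>
    intro a b h
    have : b = a := Fin.ext (by omega)
    simp [this]
  | succ d ih =>
    intro a b h
    have hb' : a.val + d < n := by omega
    have h1 := ih a ⟨a.val + d, hb'⟩ rfl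
    have h2 := hB k ⟨a.val + d, hb'⟩ k b (Or.inr ⟨rfl, by simp [h]; omega⟩)
    push_cast
    rw [abs_sub_le_iff] at *
    constructor <;> nlinarith

/-- the block approximation `C̃` of the min-plus product `C`
satisfies `C ≤ C̃ + 2δm`, `C̃ ≤ C + 4δm`, hence `|C - C̃| ≤ 4δm`. -/
theorem stmt3 {n : ℕ} (δ : ℤ) (hδ : 0 < δ) (A B : Fin n → Fin n → ℤ)
    (hA : BDiff δ A) (hB : BDiff δ B) (m : ℕ) (hm : m ∣ n) (i j : Fin n) :
    minplus A B i j ≤ Ctil m A B i j + 2 * δ * m ∧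
    Ctil m A B i j ≤ minplus A B i j + 4 * δ * m ∧
    |minplus A B i j - Ctil m A B i j| ≤ 4 * δ * m := by
  have hn : 0 < n := i.pos
  have hm0 : 0 < m := by
    rcases Nat.eq_zero_or_pos m with h | h
    · subst h; obtain ⟨c, rfl⟩ := hm; simp at hn
    · exact h
  have hδ' : (0:ℤ) ≤ δ := le_of_lt hδ
  have hrepval : ∀ a : Fin n, a.val = (rep m a).val + a.val % m := by
    intro a
    show a.val = m * (a.val / m) + a.val % m
    exact (Nat.div_add_mod _ _).symm
  have hmodle : ∀ a : Fin n, ((a.val % m : ℕ) : ℤ) ≤ (m : ℤ) := by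
    intro a; exact_mod_cast (Nat.mod_lt _ hm0).le
  have hrow : ∀ (M : Fin n → Fin n → ℤ), BDiff δ M → ∀ (a k : Fin n),
      |M a k - M (rep m a) k| ≤ δ * m := by
    intro M hM a k
    calc |M a k - M (rep m a) k| ≤ δ * (a.val % m) :=
          bdiff_row hM k (a.val % m) (rep m a) a (hrepval a)
      _ ≤ δ * m := mul_le_mul_of_nonneg_left (hmodle a) hδ'
  have hcol : ∀ (M : Fin n → Fin n → ℤ), BDiff δ M → ∀ (k a : Fin n),
      |M k a - M k (rep m a)| ≤ δ * m := by
    intro M hM k a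
    calc |M k a - M k (rep m a)| ≤ δ * (a.val % m) :=
          bdiff_col hM k (a.val % m) (rep m a) a (hrepval a)
      _ ≤ δ * m := mul_le_mul_of_nonneg_left (hmodle a) hδ'
  -- Part 1 : C ≤ C̃ + 2δm
  have part1 : minplus A B i j ≤ Ctil m A B i j + 2 * δ * m := by
    obtain ⟨k', hk'mem, hk'⟩ := Finset.exists_mem_eq_inf'
      (s := (Finset.univ : Finset (Fin n)).filter fun k => m ∣ k.val)
      ⟨⟨0, i.pos⟩, by simp⟩ (fun k => A (rep m i) k + B k (rep m j))
    have h1 : minplus A B i j ≤ A i k' + B k' j :=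
      Finset.inf'_le _ (Finset.mem_univ k')
    have h2 := abs_le.1 (hrow A hA i k')
    have h3 := abs_le.1 (hcol B hB k' j)
    have h4 : Ctil m A B i j = A (rep m i) k' + B k' (rep m j) := hk'
    linarith [h2.2, h3.2]
  -- Part 2 : C̃ ≤ C + 4δm
  have part2 : Ctil m A B i j ≤ minplus A B i j + 4 * δ * m := by
    obtain ⟨k, _, hkeq⟩ := Finset.exists_mem_eq_inf'
      (s := (Finset.univ : Finset (Fin n)))
      ⟨i, Finset.mem_univ i⟩ (fun k => A i k + B k j)
    have hmem : rep m k ∈ (Finset.univ : Finset (Fin n)).filter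
        fun k => m ∣ k.val :=
      Finset.mem_filter.2 ⟨Finset.mem_univ _, ⟨k.val / m, rfl⟩⟩
    have h2 : Ctil m A B i j ≤ A (rep m i) (rep m k) + B (rep m k) (rep m j) :=
      Finset.inf'_le _ hmem
    have a1 := abs_le.1 (hrow A hA i (rep m k))
    have a2 := abs_le.1 (hcol A hA i k)
    have b1 := abs_le.1 (hcol B hB (rep m k) j)
    have b2 := abs_le.1 (hrow B hB k j)
    have h5 : minplus A B i j = A i k + B k j := hkeq
    linarith [a1.1, a2.1, b1.1, b2.1]
  refine ⟨part1, part2, ?_⟩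
  have hmn : (0:ℤ) ≤ δ * m := mul_nonneg hδ' (by positivity)
  rw [abs_le]
  constructor <;> linarith
end

section
/- With the setup of the approximate min-plus product: if C_{i,j} = A_{i,k} + B_{k,j} (i.e., k achieves the minimum), then the representative k' of k's block lies in the candidate set K(i',j') = { k' ∈ [n]' : A_{i',k'} + B_{k',j'} ≤ C̃_{i',j'} + 8δm }. -/
lemma row_step {n : ℕ} {δ : ℤ} {A : Fin n → Fin n → ℤ} (hA : BDiff δ A) (hδ : 0 ≤ δ)
    (d : ℕ) : ∀ (i i' j : Fin n), i'.val = i.val + d → |A i' j - A i j| ≤ δ * d := by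
  induction d with
  | zero =>
    intro i i' j h
    have : i' = i := Fin.ext (by omega)
    simp [this]
  | succ d ih =>
    intro i i' j h
    have hmid : i.val + d < n := by omega
    set mid : Fin n := ⟨i.val + d, hmid⟩ with hmiddef
    have h1 := ih i mid j rfl
    have h2 := hA mid j i' j (Or.inl ⟨by simp [hmiddef]; omega, rfl⟩)
    calc |A i' j - A i j| = |(A i' j - A mid j) + (A mid j - A i j)| := by
          rw [sub_add_sub_cancel]
      _ ≤ |A i' j - A mid j| + |A mid j - A i j| := abs_add_le _ _
      _ ≤ δ + δ * d := add_le_add h2 h1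
      _ = δ * ((d : ℤ) + 1) := by ring
      _ = δ * ((d + 1 : ℕ) : ℤ) := by push_cast; ring

lemma col_step {n : ℕ} {δ : ℤ} {A : Fin n → Fin n → ℤ} (hA : BDiff δ A) (hδ : 0 ≤ δ)
    (d : ℕ) : ∀ (i j j' : Fin n), j'.val = j.val + d → |A i j' - A i j| ≤ δ * d := by
  induction d with
  | zero =>
    intro i j j' h
    have : j' = j := Fin.ext (by omega)
    simp [this]
  | succ d ih =>
    intro i j j' h
    have hmid : j.val + d < n := by omega
    set mid : Fin n := ⟨j.val + d, hmid⟩ with hmiddef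
    have h1 := ih i j mid rfl
    have h2 := hA i mid i j' (Or.inr ⟨rfl, by simp [hmiddef]; omega⟩)
    calc |A i j' - A i j| = |(A i j' - A i mid) + (A i mid - A i j)| := by
          rw [sub_add_sub_cancel]
      _ ≤ |A i j' - A i mid| + |A i mid - A i j| := abs_add_le _ _
      _ ≤ δ + δ * d := add_le_add h2 h1
      _ = δ * ((d : ℤ) + 1) := by ring
      _ = δ * ((d + 1 : ℕ) : ℤ) := by push_cast; ring

/-- if `k` achieves the minimum `C_{i,j} = A_{i,k} + B_{k,j}`, then
the representative of `k`'s block lies in the candidate set `K(i',j')`. -/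
theorem stmt4 {n : ℕ} (δ : ℤ) (hδ : 0 < δ) (A B : Fin n → Fin n → ℤ)
    (hA : BDiff δ A) (hB : BDiff δ B) (m : ℕ) (hm : m ∣ n) (i j k : Fin n)
    (hk : minplus A B i j = A i k + B k j) :
    rep m k ∈ Kset m δ A B i j := by
  have hδ0 : (0:ℤ) ≤ δ := le_of_lt hδ
  have hm0 : 0 < m := by
    rcases Nat.eq_zero_or_pos m with h | h
    · subst h; simp at hm; exact absurd i.pos (by omega)
    · exact h
  -- representatives
  have hrepval : ∀ x : Fin n, x.val = (rep m x).val + x.val % m := by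
    intro x; have h := Nat.div_add_mod x.val m; simp [rep]; omega
  have hmod : ∀ x : Fin n, x.val % m < m := fun x => Nat.mod_lt _ hm0
  set i' := rep m i
  set j' := rep m j
  set k' := rep m k
  -- row/col moves
  have hArow : ∀ t : Fin n, |A i t - A i' t| ≤ δ * (i.val % m) := by
    intro t
    have := row_step hA hδ0 (i.val % m) i' i t (hrepval i)
    exact this
  have hAcol : ∀ s : Fin n, |A s k - A s k'| ≤ δ * (k.val % m) := by
    intro s; exact col_step hA hδ0 (k.val % m) s k' k (hrepval k)
  have hBrow : ∀ t : Fin n, |B k t - B k' t| ≤ δ * (k.val % m) := by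
    intro t; exact row_step hB hδ0 (k.val % m) k' k t (hrepval k)
  have hBcol : ∀ s : Fin n, |B s j - B s j'| ≤ δ * (j.val % m) := by
    intro s; exact col_step hB hδ0 (j.val % m) s j' j (hrepval j)
  -- Ctil minimizer
  obtain ⟨k₀, hk₀mem, hk₀⟩ := Finset.exists_mem_eq_inf'
    (s := (Finset.univ : Finset (Fin n)).filter fun t => m ∣ t.val)
    (H := ⟨⟨0, i.pos⟩, by simp⟩) (f := fun t => A i' t + B t j')
  have hCtil : Ctil m A B i j = A i' k₀ + B k₀ j' := hk₀
  -- minplus ≤ value at k₀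
  have hmp : minplus A B i j ≤ A i k₀ + B k₀ j :=
    Finset.inf'_le _ (Finset.mem_univ k₀)
  -- bounds
  have e1 := abs_le.mp (hArow k₀)
  have e2 := abs_le.mp (hBcol k₀)
  have e3 := abs_le.mp (hArow k')
  have e4 := abs_le.mp (hAcol i)
  have e5 := abs_le.mp (hBrow j')
  have e6 := abs_le.mp (hBcol k)
  -- goal membership
  have hdvd : m ∣ k'.val := Dvd.intro _ rfl
  have hmz : (0:ℤ) < (m:ℤ) := by exact_mod_cast hm0
  have hb1 : δ * ((i.val : ℤ) % (m:ℤ)) ≤ δ * m :=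
    mul_le_mul_of_nonneg_left (Int.emod_lt_of_pos _ hmz).le hδ0
  have hb2 : δ * ((j.val : ℤ) % (m:ℤ)) ≤ δ * m :=
    mul_le_mul_of_nonneg_left (Int.emod_lt_of_pos _ hmz).le hδ0
  have hb3 : δ * ((k.val : ℤ) % (m:ℤ)) ≤ δ * m :=
    mul_le_mul_of_nonneg_left (Int.emod_lt_of_pos _ hmz).le hδ0
  have hδm : (0:ℤ) ≤ δ * m := by positivity
  have key : A i' k' + B k' j' ≤ Ctil m A B i j + 8 * δ * m := by
    rw [hCtil]
    -- A i' k' ≤ A i k' + δ e_i ≤ A i k + δ e_i + δ e_k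
    -- B k' j' ≤ B k j' + δ e_k ≤ B k j + δ e_k + δ e_j
    -- A i k + B k j = minplus ≤ A i k₀ + B k₀ j ≤ A i' k₀ + δ e_i + B k₀ j' + δ e_j
    have hmp' : A i k + B k j ≤ A i k₀ + B k₀ j := hk ▸ hmp
    linarith [e1.2, e2.2, e3.1, e4.1, e5.1, e6.1, hb1, hb2, hb3, hδm, hmp']
  simp only [Kset, Finset.mem_filter, Finset.mem_univ, true_and]
  exact ⟨hdvd, key⟩
end

section
/- With the setup of candidate sets: for indices i, j, k with k' ∈ K(i',j'), the sum A_{i,k} + B_{k,j} lies in the interval [C_{i,j}, C_{i,j} + 16δm]. -/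
lemma bdiff_transpose {n : ℕ} {δ : ℤ} {A : Fin n → Fin n → ℤ} (hA : BDiff δ A) :
    BDiff δ (fun i j => A j i) := by
  intro i j i' j' h
  rcases h with ⟨h1, h2⟩ | ⟨h1, h2⟩
  · exact hA j i j' i' (Or.inr ⟨h2, h1⟩)
  · exact hA j i j' i' (Or.inl ⟨h2, h1⟩)

lemma row_move {n : ℕ} {δ : ℤ} {A : Fin n → Fin n → ℤ} (hA : BDiff δ A)
    (j : Fin n) : ∀ (d : ℕ) (i i' : Fin n), i.val = i'.val + d →
    |A i j - A i' j| ≤ δ * d := by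
  intro d
  induction d with
  | zero =>
    intro i i' h
    have : i = i' := Fin.ext (by omega)
    simp [this]
  | succ d ih =>
    intro i i' h
    have hlt : i'.val + d < n := by omega
    have h1 : |A i j - A ⟨i'.val + d, hlt⟩ j| ≤ δ :=
      hA ⟨i'.val + d, hlt⟩ j i j (Or.inl ⟨by simp; omega, rfl⟩)
    have h2 := ih ⟨i'.val + d, hlt⟩ i' rfl
    calc |A i j - A i' j|
        = |(A i j - A ⟨i'.val + d, hlt⟩ j) + (A ⟨i'.val + d, hlt⟩ j - A i' j)| := by
          ring_nf
      _ ≤ |A i j - A ⟨i'.val + d, hlt⟩ j| + |A ⟨i'.val + d, hlt⟩ j - A i' j| :=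
          abs_add_le _ _
      _ ≤ δ + δ * d := add_le_add h1 h2
      _ = δ * ((d : ℤ) + 1) := by ring
      _ = δ * ((d + 1 : ℕ) : ℤ) := by push_cast; ring

lemma both_move {n : ℕ} {δ : ℤ} {A : Fin n → Fin n → ℤ} (hA : BDiff δ A)
    (hδ : 0 < δ) {m : ℕ} (hm0 : 0 < m) (i k : Fin n) :
    |A i k - A (rep m i) (rep m k)| ≤ 2 * (δ * m) := by
  have hi : i.val = (rep m i).val + i.val % m := by
    simp only [rep]; exact (Nat.div_add_mod i.val m).symm
  have hk : k.val = (rep m k).val + k.val % m := by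
    simp only [rep]; exact (Nat.div_add_mod k.val m).symm
  have h1 : |A i k - A (rep m i) k| ≤ δ * (i.val % m) :=
    row_move hA k (i.val % m) i (rep m i) hi
  have h2 : |A (rep m i) k - A (rep m i) (rep m k)| ≤ δ * (k.val % m) :=
    row_move (bdiff_transpose hA) (rep m i) (k.val % m) k (rep m k) hk
  have hb1 : (δ : ℤ) * (i.val % m) ≤ δ * m := by
    have : ((i.val % m : ℕ) : ℤ) ≤ (m : ℤ) := by
      exact_mod_cast le_of_lt (Nat.mod_lt _ hm0)
    exact mul_le_mul_of_nonneg_left this (le_of_lt hδ)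
  have hb2 : (δ : ℤ) * (k.val % m) ≤ δ * m := by
    have : ((k.val % m : ℕ) : ℤ) ≤ (m : ℤ) := by
      exact_mod_cast le_of_lt (Nat.mod_lt _ hm0)
    exact mul_le_mul_of_nonneg_left this (le_of_lt hδ)
  calc |A i k - A (rep m i) (rep m k)|
      = |(A i k - A (rep m i) k) + (A (rep m i) k - A (rep m i) (rep m k))| := by
        ring_nf
    _ ≤ _ := abs_add_le _ _
    _ ≤ δ * m + δ * m := add_le_add (h1.trans hb1) (h2.trans hb2)
    _ = 2 * (δ * m) := by ring

/-- if the representative of `k`'s block lies in `K(i',j')`, then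
`A_{i,k} + B_{k,j} ∈ [C_{i,j}, C_{i,j} + 16δm]`. -/
theorem stmt6 {n : ℕ} (δ : ℤ) (hδ : 0 < δ) (A B : Fin n → Fin n → ℤ)
    (hA : BDiff δ A) (hB : BDiff δ B) (m : ℕ) (hm : m ∣ n) (i j k : Fin n)
    (hk : rep m k ∈ Kset m δ A B i j) :
    minplus A B i j ≤ A i k + B k j ∧
    A i k + B k j ≤ minplus A B i j + 16 * δ * m := by
  have hm0 : 0 < m := by
    rcases Nat.eq_zero_or_pos m with rfl | h
    · exfalso
      have : n = 0 := Nat.eq_zero_of_zero_dvd hm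
      have := i.isLt
      omega
    · exact h
  constructor
  · exact Finset.inf'_le _ (Finset.mem_univ k)
  · simp only [Kset, Finset.mem_filter, Finset.mem_univ, true_and] at hk
    obtain ⟨-, hle⟩ := hk
    obtain ⟨k0, -, hk0⟩ := Finset.exists_mem_eq_inf'
      (⟨i, Finset.mem_univ i⟩ : (Finset.univ : Finset (Fin n)).Nonempty)
      (fun k => A i k + B k j)
    have hmin : minplus A B i j = A i k0 + B k0 j := hk0
    have hCtil : Ctil m A B i j ≤ A (rep m i) (rep m k0) + B (rep m k0) (rep m j) := by
      apply Finset.inf'_le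
      simp only [Finset.mem_filter, Finset.mem_univ, true_and, rep]
      exact Dvd.intro _ rfl
    have hb1 := abs_le.mp (both_move hA hδ hm0 i k)
    have hb2 := abs_le.mp (both_move (bdiff_transpose hB) hδ hm0 j k)
    have hb3 := abs_le.mp (both_move hA hδ hm0 i k0)
    have hb4 := abs_le.mp (both_move (bdiff_transpose hB) hδ hm0 j k0)
    linarith
end

section
/- Define A^r_{i,k} = A_{i,k} - A_{i,r} and B^r_{k,j} = B_{k,j} - B_{r,j}. If k' ∈ K(i',j') and r' ∈ K(i',j') (where r is a representative index, r = r'), then |A^r_{i,k} + B^r_{k,j}| ≤ 16δm. -/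
lemma row_diff {n : ℕ} {δ : ℤ} {A : Fin n → Fin n → ℤ} (hδ : 0 ≤ δ)
    (hA : BDiff δ A) (j : Fin n) :
    ∀ d (a b : Fin n), b.val = a.val + d → |A b j - A a j| ≤ δ * d := by
  intro d
  induction d with
  | zero =>
    intro a b h
    have hba : b = a := Fin.ext (by omega)
    simp [hba]
  | succ d ih =>
    intro a b h
    have hc : a.val + d < n := by have := b.isLt; omega
    set c : Fin n := ⟨a.val + d, hc⟩ with hcdef
    have h1 := ih a c rfl
    have h2 : |A b j - A c j| ≤ δ :=
      hA c j b j (Or.inl ⟨by simp [hcdef]; omega, rfl⟩)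
    calc |A b j - A a j| ≤ |A b j - A c j| + |A c j - A a j| :=
          abs_sub_le _ _ _
      _ ≤ δ + δ * d := add_le_add h2 h1
      _ = δ * ((d : ℤ) + 1) := by ring
      _ = δ * ((d + 1 : ℕ) : ℤ) := by push_cast; ring

lemma col_diff {n : ℕ} {δ : ℤ} {B : Fin n → Fin n → ℤ} (hδ : 0 ≤ δ)
    (hB : BDiff δ B) (i : Fin n) :
    ∀ d (a b : Fin n), b.val = a.val + d → |B i b - B i a| ≤ δ * d := by
  intro d
  induction d with
  | zero =>
    intro a b h
    have hba : b = a := Fin.ext (by omega)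
    simp [hba]
  | succ d ih =>
    intro a b h
    have hc : a.val + d < n := by have := b.isLt; omega
    set c : Fin n := ⟨a.val + d, hc⟩ with hcdef
    have h1 := ih a c rfl
    have h2 : |B i b - B i c| ≤ δ :=
      hB i c i b (Or.inr ⟨rfl, by simp [hcdef]; omega⟩)
    calc |B i b - B i a| ≤ |B i b - B i c| + |B i c - B i a| :=
          abs_sub_le _ _ _
      _ ≤ δ + δ * d := add_le_add h2 h1
      _ = δ * ((d : ℤ) + 1) := by ring
      _ = δ * ((d + 1 : ℕ) : ℤ) := by push_cast; ring

lemma rep_row_bound {n m : ℕ} {δ : ℤ} {A : Fin n → Fin n → ℤ} (hδ : 0 ≤ δ)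
    (hA : BDiff δ A) (hm0 : 0 < m) (i j : Fin n) :
    |A i j - A (rep m i) j| ≤ δ * m := by
  have h := row_diff hδ hA j (i.val % m) (rep m i) i (by
    have := Nat.div_add_mod i.val m
    simp only [rep]
    omega)
  refine h.trans (mul_le_mul_of_nonneg_left ?_ hδ)
  exact_mod_cast (Nat.mod_lt _ hm0).le

lemma rep_col_bound {n m : ℕ} {δ : ℤ} {B : Fin n → Fin n → ℤ} (hδ : 0 ≤ δ)
    (hB : BDiff δ B) (hm0 : 0 < m) (i j : Fin n) :
    |B i j - B i (rep m j)| ≤ δ * m := by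
  have h := col_diff hδ hB i (j.val % m) (rep m j) j (by
    have := Nat.div_add_mod j.val m
    simp only [rep]
    omega)
  refine h.trans (mul_le_mul_of_nonneg_left ?_ hδ)
  exact_mod_cast (Nat.mod_lt _ hm0).le

/-- for `A^r_{i,k} = A_{i,k} - A_{i,r}`, `B^r_{k,j} = B_{k,j} - B_{r,j}`,
if the representative `k'` of `k` and the representative index `r` both lie in
`K(i',j')`, then `|A^r_{i,k} + B^r_{k,j}| ≤ 16δm`. -/
theorem stmt7 {n : ℕ} (δ : ℤ) (hδ : 0 < δ) (A B : Fin n → Fin n → ℤ)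
    (hA : BDiff δ A) (hB : BDiff δ B) (m : ℕ) (hm : m ∣ n) (i j k r : Fin n)
    (hr : m ∣ r.val)
    (hkK : rep m k ∈ Kset m δ A B i j) (hrK : r ∈ Kset m δ A B i j) :
    |(A i k - A i r) + (B k j - B r j)| ≤ 16 * δ * m := by
  have hδ0 : 0 ≤ δ := hδ.le
  have hm0 : 0 < m := by
    rcases Nat.eq_zero_or_pos m with h0 | h
    · subst h0
      have hn0 : n = 0 := zero_dvd_iff.mp hm
      have := i.isLt
      omega
    · exact h
  set i' := rep m i
  set j' := rep m j
  set k' := rep m k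
  have hk'dvd : m ∣ k'.val := ⟨k.val / m, rfl⟩
  obtain ⟨-, -, hkle⟩ := Finset.mem_filter.mp hkK
  obtain ⟨-, -, hrle⟩ := Finset.mem_filter.mp hrK
  have hmemk : k' ∈ (Finset.univ : Finset (Fin n)).filter fun x => m ∣ x.val :=
    Finset.mem_filter.mpr ⟨Finset.mem_univ _, hk'dvd⟩
  have hmemr : r ∈ (Finset.univ : Finset (Fin n)).filter fun x => m ∣ x.val :=
    Finset.mem_filter.mpr ⟨Finset.mem_univ _, hr⟩
  have hCk : Ctil m A B i j ≤ A i' k' + B k' j' := Finset.inf'_le _ hmemk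
  have hCr : Ctil m A B i j ≤ A i' r + B r j' := Finset.inf'_le _ hmemr
  have hM : |(A i' k' + B k' j') - (A i' r + B r j')| ≤ 8 * δ * m := by
    rw [abs_le]; constructor <;> linarith
  have h1 : |A i k - A i' k| ≤ δ * m := rep_row_bound hδ0 hA hm0 i k
  have h2 : |A i' k - A i' k'| ≤ δ * m := rep_col_bound hδ0 hA hm0 i' k
  have h3 : |A i r - A i' r| ≤ δ * m := rep_row_bound hδ0 hA hm0 i r
  have h4 : |B k j - B k j'| ≤ δ * m := rep_col_bound hδ0 hB hm0 k j
  have h5 : |B k j' - B k' j'| ≤ δ * m := rep_row_bound hδ0 hB hm0 k j'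
  have h6 : |B r j - B r j'| ≤ δ * m := rep_col_bound hδ0 hB hm0 r j
  have key : (A i k - A i r) + (B k j - B r j) =
      (A i k - A i' k) + (A i' k - A i' k') - (A i r - A i' r)
      + (B k j - B k j') + (B k j' - B k' j') - (B r j - B r j')
      + ((A i' k' + B k' j') - (A i' r + B r j')) := by ring
  rw [abs_le] at h1 h2 h3 h4 h5 h6 hM
  rw [abs_le]
  constructor <;> [nlinarith [key]; nlinarith [key]]
end

section
/- Polynomial encoding of min-plus product: let A, B be a×b and b×c matrices over ℤ ∪ {+∞} with finite entries in [−M, M]. Define polynomial matrices A(x), B(x) by replacing finite entry v with x^{v+M} and +∞ with 0. Let C(x) = A(x)·B(x) (ordinary matrix product over ℤ[x]). Then for each (i,j), the min-plus product entry (A ⋆ B)_{i,j} is finite iff C(x)_{i,j} ≠ 0, and in that case (A ⋆ B)_{i,j} = (lowest degree of a nonzero term of C(x)_{i,j}) − 2M. -/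
/-- polynomial encoding of the min-plus product. Finite entries
`v ∈ [-M, M]` are encoded as `x^{v+M} ∈ ℕ[x]` and `∞` as `0`; with
`C(x) = A(x)·B(x)` the ordinary matrix product, `(A ⋆ B)_{i,j}` is finite iff
`C(x)_{i,j} ≠ 0`, and then `(A ⋆ B)_{i,j}` equals the lowest degree of a
nonzero term of `C(x)_{i,j}` minus `2M`. -/
theorem stmt15 (a b c M : ℕ) (hM : 0 < M)
    (A : Fin a → Fin b → WithTop ℤ) (B : Fin b → Fin c → WithTop ℤ)
    (hA : ∀ i k (v : ℤ), A i k = (v : WithTop ℤ) → -(M : ℤ) ≤ v ∧ v ≤ M)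
    (hB : ∀ k j (v : ℤ), B k j = (v : WithTop ℤ) → -(M : ℤ) ≤ v ∧ v ≤ M)
    (i : Fin a) (j : Fin c) :
    let enc : WithTop ℤ → Polynomial ℕ :=
      fun v => WithTop.recTopCoe 0 (fun x : ℤ => Polynomial.X ^ (x + M).toNat) v
    let mp : WithTop ℤ := Finset.univ.inf (fun k : Fin b => A i k + B k j)
    let Cx : Polynomial ℕ := ∑ k : Fin b, enc (A i k) * enc (B k j)
    (mp ≠ ⊤ ↔ Cx ≠ 0) ∧
    (∀ v : ℤ, mp = (v : WithTop ℤ) →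
      (Cx.natTrailingDegree : ℤ) - 2 * M = v) := by
  classical
  intro enc mp Cx
  -- term description
  have hterm : ∀ k : Fin b, (∀ α β : ℤ, A i k = α → B k j = β →
      enc (A i k) * enc (B k j) = Polynomial.X ^ ((α + M).toNat + (β + M).toNat)) := by
    intro k α β hα hβ
    simp [enc, hα, hβ, pow_add]
  have htermtop : ∀ k : Fin b, (A i k = ⊤ ∨ B k j = ⊤) →
      enc (A i k) * enc (B k j) = 0 := by
    rintro k (h | h) <;> simp [enc, h]
  -- coeff of Cx
  have hcoeff : ∀ n : ℕ, Cx.coeff n = ∑ k : Fin b, (enc (A i k) * enc (B k j)).coeff n := by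
    intro n; simp [Cx, Polynomial.finset_sum_coeff]
  constructor
  · constructor
    · intro hmp hC
      rw [Ne, Finset.inf_eq_top_iff] at hmp
      push_neg at hmp
      obtain ⟨k, -, hk⟩ := hmp
      rw [WithTop.add_ne_top] at hk
      obtain ⟨α, hα⟩ := Option.ne_none_iff_exists'.mp hk.1
      obtain ⟨β, hβ⟩ := Option.ne_none_iff_exists'.mp hk.2
      have h1 := hterm k α β hα hβ
      have : Cx.coeff ((α + M).toNat + (β + M).toNat) = 0 := by rw [hC]; simp
      rw [hcoeff] at this
      have hle : (enc (A i k) * enc (B k j)).coeff ((α + M).toNat + (β + M).toNat) ≤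
          ∑ k' : Fin b, (enc (A i k') * enc (B k' j)).coeff ((α + M).toNat + (β + M).toNat) :=
        Finset.single_le_sum (f := fun k' => (enc (A i k') * enc (B k' j)).coeff
          ((α + M).toNat + (β + M).toNat)) (fun _ _ => Nat.zero_le _) (Finset.mem_univ k)
      rw [this, h1] at hle
      simp at hle
    · intro hC hmp
      apply hC
      rw [Finset.inf_eq_top_iff] at hmp
      have : ∀ k : Fin b, enc (A i k) * enc (B k j) = 0 := by
        intro k
        have := hmp k (Finset.mem_univ k)
        rcases WithTop.add_eq_top.mp this with h | h
        · exact htermtop k (Or.inl h)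
        · exact htermtop k (Or.inr h)
      simp [Cx, this]
  · intro v hv
    have hb : (Finset.univ : Finset (Fin b)).Nonempty := by
      by_contra h
      rw [Finset.not_nonempty_iff_eq_empty] at h
      rw [show mp = Finset.univ.inf (fun k : Fin b => A i k + B k j) from rfl, h] at hv
      simp at hv
    obtain ⟨k0, -, hk0⟩ := Finset.exists_mem_eq_inf Finset.univ hb
      (fun k : Fin b => A i k + B k j)
    have hv2 : A i k0 + B k0 j = (v : WithTop ℤ) := by
      rw [← hk0]; exact hv
    obtain ⟨α, β, hα, hβ, hαβ⟩ := WithTop.add_eq_coe.mp hv2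
    have hαb := hA i k0 α hα.symm
    have hβb := hB k0 j β hβ.symm
    -- key exponent
    set N : ℕ := (α + M).toNat + (β + M).toNat with hN
    have hNz : (N : ℤ) = v + 2 * M := by
      have h1 : ((α + M).toNat : ℤ) = α + M := Int.toNat_of_nonneg (by linarith [hαb.1])
      have h2 : ((β + M).toNat : ℤ) = β + M := Int.toNat_of_nonneg (by linarith [hβb.1])
      push_cast [hN]
      rw [h1, h2]; linarith
    -- general exponent bound: every finite term has exponent ≥ N
    have hexp : ∀ (k : Fin b) (α' β' : ℤ), A i k = α' → B k j = β' →
        N ≤ (α' + M).toNat + (β' + M).toNat := by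
      intro k α' β' hα' hβ'
      have hαb' := hA i k α' hα'
      have hβb' := hB k j β' hβ'
      have hle : (v : WithTop ℤ) ≤ ((α' : WithTop ℤ) + (β' : ℤ)) := by
        rw [← hα', ← hβ', ← hv2, ← hk0]
        exact Finset.inf_le (Finset.mem_univ k)
      rw [← WithTop.coe_add] at hle
      have hle' : v ≤ α' + β' := by exact_mod_cast hle
      have h1 : ((α' + M).toNat : ℤ) = α' + M := Int.toNat_of_nonneg (by linarith [hαb'.1])
      have h2 : ((β' + M).toNat : ℤ) = β' + M := Int.toNat_of_nonneg (by linarith [hβb'.1])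
      have : (N : ℤ) ≤ ((α' + M).toNat + (β' + M).toNat : ℕ) := by
        push_cast
        rw [h1, h2, hNz]; linarith
      exact_mod_cast this
    -- coeff N ≠ 0
    have hCN : Cx.coeff N ≠ 0 := by
      rw [hcoeff]
      have h1 := hterm k0 α β hα.symm hβ.symm
      intro h
      have hle : (enc (A i k0) * enc (B k0 j)).coeff N ≤
          ∑ k' : Fin b, (enc (A i k') * enc (B k' j)).coeff N :=
        Finset.single_le_sum (f := fun k' => (enc (A i k') * enc (B k' j)).coeff N)
          (fun _ _ => Nat.zero_le _) (Finset.mem_univ k0)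
      rw [h, h1] at hle
      simp [hN] at hle
    have hCxne : Cx ≠ 0 := fun h => hCN (by simp [h])
    have hlow : ∀ m < N, Cx.coeff m = 0 := by
      intro m hm
      rw [hcoeff]
      apply Finset.sum_eq_zero
      intro k _
      rcases hAk : A i k with _ | α'
      · show ((0 : Polynomial ℕ) * enc (B k j)).coeff m = 0
        simp
      rcases hBk : B k j with _ | β'
      · show ((Polynomial.X ^ (α' + M).toNat : Polynomial ℕ) * 0).coeff m = 0
        simp
      show ((Polynomial.X ^ (α' + M).toNat : Polynomial ℕ) *
        Polynomial.X ^ (β' + M).toNat).coeff m = 0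
      have hge := hexp k α' β' hAk hBk
      have hne : m ≠ (α' + M).toNat + (β' + M).toNat := by omega
      rw [← pow_add, Polynomial.coeff_X_pow]
      simp [hne]
    have htd : Cx.natTrailingDegree = N :=
      le_antisymm (Polynomial.natTrailingDegree_le_of_ne_zero hCN)
        (Polynomial.le_natTrailingDegree hCxne hlow)
    rw [htd, hNz]; ring
end

section
/- Candidate set nesting lemma: with blocks of size l and l/2 and δ-bounded-difference matrices A, B, if k'_{l/2} ∈ K_{l/2}(i'_{l/2}, j'_{l/2}) then k'_l ∈ K_l(i'_l, j'_l). That is, the representative for block size l of any candidate at block size l/2 is a candidate at block size l. -/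
lemma lip1 {n : ℕ} {δ : ℤ} {A : Fin n → Fin n → ℤ} (hA : BDiff δ A) (hδ : 0 ≤ δ) :
    ∀ (d : ℕ) (a b j : Fin n), b.val = a.val + d → |A b j - A a j| ≤ δ * d := by
  intro d
  induction d with
  | zero =>
    intro a b j hab
    have : b = a := Fin.ext (by omega)
    simp [this]
  | succ d ih =>
    intro a b j hab
    have hc : a.val + d < n := by have := b.isLt; omega
    set c : Fin n := ⟨a.val + d, hc⟩ with hcdef
    have h1 : |A b j - A c j| ≤ δ := hA c j b j (Or.inl ⟨by simp [hcdef]; omega, rfl⟩)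
    have h2 : |A c j - A a j| ≤ δ * d := ih a c j rfl
    have h3 := abs_sub_le (A b j) (A c j) (A a j)
    push_cast
    linarith

lemma lip2 {n : ℕ} {δ : ℤ} {A : Fin n → Fin n → ℤ} (hA : BDiff δ A) (hδ : 0 ≤ δ) :
    ∀ (d : ℕ) (i a b : Fin n), b.val = a.val + d → |A i b - A i a| ≤ δ * d := by
  intro d
  induction d with
  | zero =>
    intro i a b hab
    have : b = a := Fin.ext (by omega)
    simp [this]
  | succ d ih =>
    intro i a b hab
    have hc : a.val + d < n := by have := b.isLt; omega
    set c : Fin n := ⟨a.val + d, hc⟩ with hcdef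
    have h1 : |A i b - A i c| ≤ δ := hA i c i b (Or.inr ⟨rfl, by simp [hcdef]; omega⟩)
    have h2 : |A i c - A i a| ≤ δ * d := ih i a c rfl
    have h3 := abs_sub_le (A i b) (A i c) (A i a)
    push_cast
    linarith

lemma rep_two {n : ℕ} (m : ℕ) (hm : 0 < m) (i : Fin n) :
    (rep m i).val = (rep (2*m) i).val + m * ((i.val / m) % 2) ∧
    m * ((i.val / m) % 2) ≤ m := by
  constructor
  · show m * (i.val / m) = 2*m * (i.val / (2*m)) + m * ((i.val/m) % 2)
    have h : i.val / (2*m) = i.val / m / 2 := by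
      rw [Nat.div_div_eq_div_mul, Nat.mul_comm]
    rw [h]
    conv_lhs => rw [← Nat.div_add_mod (i.val / m) 2]
    ring
  · have : (i.val / m) % 2 ≤ 1 := by omega
    calc m * ((i.val/m) % 2) ≤ m * 1 := Nat.mul_le_mul_left m this
    _ = m := Nat.mul_one m

/-- candidate set nesting: for δ-bounded-difference `A, B` and
block sizes `l`, `l/2`, if the level-`l/2` representative of `k` is in
`K_{l/2}(i'_{l/2}, j'_{l/2})` then the level-`l` representative of `k` is in
`K_l(i'_l, j'_l)`. -/
theorem stmt16 {n : ℕ} (δ : ℤ) (hδ : 0 < δ) (A B : Fin n → Fin n → ℤ)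
    (hA : BDiff δ A) (hB : BDiff δ B) (l : ℕ) (hl : 0 < l) (h2 : 2 ∣ l)
    (hn : l ∣ n) (i j k : Fin n)
    (h : rep (l / 2) k ∈ Kset (l / 2) δ A B i j) :
    rep l k ∈ Kset l δ A B i j := by
  obtain ⟨m, rfl⟩ := h2
  have hm : 0 < m := by omega
  have hhalf : 2 * m / 2 = m := by omega
  rw [hhalf] at h
  simp only [Kset, Finset.mem_filter, Finset.mem_univ, true_and] at h ⊢
  obtain ⟨hdk, hineq⟩ := h
  refine ⟨⟨k.val / (2*m), rfl⟩, ?_⟩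
  have hδ' : (0:ℤ) ≤ δ := hδ.le
  obtain ⟨hi_eq, hi_le⟩ := rep_two m hm i
  obtain ⟨hj_eq, hj_le⟩ := rep_two m hm j
  obtain ⟨hk_eq, hk_le⟩ := rep_two m hm k
  set di := m * ((i.val / m) % 2) with hdi
  set dj := m * ((j.val / m) % 2) with hdj
  set dk := m * ((k.val / m) % 2) with hdk2
  -- Lipschitz bounds relating level-m and level-2m representatives
  have b1 : |A (rep m i) (rep (2*m) k) - A (rep (2*m) i) (rep (2*m) k)| ≤ δ * di :=
    lip1 hA hδ' di _ _ _ hi_eq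
  have b2 : |A (rep m i) (rep m k) - A (rep m i) (rep (2*m) k)| ≤ δ * dk :=
    lip2 hA hδ' dk _ _ _ hk_eq
  have b3 : |B (rep m k) (rep m j) - B (rep m k) (rep (2*m) j)| ≤ δ * dj :=
    lip2 hB hδ' dj _ _ _ hj_eq
  have b4 : |B (rep m k) (rep (2*m) j) - B (rep (2*m) k) (rep (2*m) j)| ≤ δ * dk :=
    lip1 hB hδ' dk _ _ _ hk_eq
  -- minimizer of the level-2m approximate product
  obtain ⟨ks, hks, hkeq⟩ := Finset.exists_mem_eq_inf'
    (⟨⟨0, i.pos⟩, by simp⟩ :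
      ((Finset.univ : Finset (Fin n)).filter fun k => (2*m) ∣ k.val).Nonempty)
    (fun k => A (rep (2*m) i) k + B k (rep (2*m) j))
  have hC : Ctil (2*m) A B i j = A (rep (2*m) i) ks + B ks (rep (2*m) j) := hkeq
  have hksd : m ∣ ks.val := by
    simp only [Finset.mem_filter, Finset.mem_univ, true_and] at hks
    exact dvd_trans (dvd_mul_left m 2) hks
  have hCm : Ctil m A B i j ≤ A (rep m i) ks + B ks (rep m j) :=
    Finset.inf'_le _ (by simp [hksd])
  have c1 : |A (rep m i) ks - A (rep (2*m) i) ks| ≤ δ * di :=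
    lip1 hA hδ' di _ _ _ hi_eq
  have c2 : |B ks (rep m j) - B ks (rep (2*m) j)| ≤ δ * dj :=
    lip2 hB hδ' dj _ _ _ hj_eq
  -- arithmetic bounds
  have e1 : δ * (di:ℤ) ≤ δ * m := mul_le_mul_of_nonneg_left (by exact_mod_cast hi_le) hδ'
  have e2 : δ * (dj:ℤ) ≤ δ * m := mul_le_mul_of_nonneg_left (by exact_mod_cast hj_le) hδ'
  have e3 : δ * (dk:ℤ) ≤ δ * m := mul_le_mul_of_nonneg_left (by exact_mod_cast hk_le) hδ'
  have e0 : (0:ℤ) ≤ δ * m := mul_nonneg hδ' (by positivity)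
  rw [abs_le] at b1 b2 b3 b4 c1 c2
  push_cast
  linarith [b1.1, b2.1, b3.1, b4.1, c1.1, c2.1, b1.2, b2.2, b3.2, b4.2, c1.2, c2.2]
end
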